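/- Each region of the graphical arrangement of a finite simple graph G in ℝ^V intersects the open unit hypercube (0,1)^V in a nonempty connected set, and distinct regions have disjoint such intersections; consequently the number of regions of the graphical arrangement equals the number of bounded regions of the arrangement A(G;3) obtained by adding the hyperplanes z_v = 0 and z_v = 1 for all v ∈ V. -/

import Mathlib

open SimpleGraph Polynomial

/-- The complement in `ℝ^V` of the graphical arrangement of `G` (hyperplanes
`z_u = z_w` over edges `{u,w}`). -/
def graphicalComplement {V : Type*} (G : SimpleGraph V) : Set (V → ℝ) :=
  {z | ∀ u w, G.Adj u w → z u ≠ z w}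

/-- The complement in `ℝ^V` of the arrangement `A(G;m)`, consisting of the hyperplanes
`z_u = z_w` for edges `{u,w}` of `G` and `z_v = i` for `v ∈ V`, `i ∈ {0,…,m-2}`. -/
def arrComplement {V : Type*} (G : SimpleGraph V) (m : ℕ) : Set (V → ℝ) :=
  {z | (∀ u w, G.Adj u w → z u ≠ z w) ∧ ∀ v : V, ∀ i : ℕ, i ≤ m - 2 → z v ≠ (i : ℝ)}

namespace RegionsAux

open Set Metric Bornology

/-- A squashing map `ℝ → (0,1)`. -/
noncomputable def sq (a : ℝ) : ℝ := (a / (1 + |a|) + 1) / 2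

lemma one_add_abs_pos (a : ℝ) : (0:ℝ) < 1 + |a| :=
  (abs_nonneg a).trans_lt (lt_one_add _)

lemma abs_sq0_lt_one (a : ℝ) : |a / (1 + |a|)| < 1 := by
  have H := one_add_abs_pos a
  calc |a / (1 + |a|)| = |a| / (1 + |a|) := by rw [abs_div, abs_of_pos H]
    _ < 1 := (div_lt_one H).2 (lt_one_add _)

lemma sq_mem (a : ℝ) : 0 < sq a ∧ sq a < 1 := by
  have h := abs_lt.1 (abs_sq0_lt_one a)
  constructor <;> [unfold sq; unfold sq] <;> nlinarith [h.1, h.2]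

lemma sq0_strictMono : StrictMono (fun a : ℝ => a / (1 + |a|)) := by
  have : StrictMono (fun a : ℝ => a / (1 + |a|)) := by
    refine strictMono_of_odd_strictMonoOn_nonneg ?_ ?_
    · intro x; simp only [abs_neg, neg_div]
    · rintro x (hx : 0 ≤ x) y (hy : 0 ≤ y) hxy
      show x / (1 + |x|) < y / (1 + |y|)
      rw [abs_of_nonneg hx, abs_of_nonneg hy,
        div_lt_div_iff₀ (by linarith) (by linarith)]
      nlinarith
  exact this

lemma sq_strictMono : StrictMono sq := by
  intro a b hab
  have := sq0_strictMono hab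
  unfold sq; linarith

lemma sq_continuous : Continuous sq := by
  unfold sq
  fun_prop (disch := intro x; nlinarith [one_add_abs_pos x])

variable {V : Type*} [Fintype V] (G : SimpleGraph V)

/-- abbreviation for the open cube -/
def cube : Set (V → ℝ) := {z | ∀ v, 0 < z v ∧ z v < 1}

lemma mem_A_iff {z : V → ℝ} :
    z ∈ arrComplement G 3 ↔ z ∈ graphicalComplement G ∧ ∀ v, z v ≠ 0 ∧ z v ≠ 1 := by
  constructor
  · rintro ⟨h1, h2⟩
    exact ⟨h1, fun v => ⟨by simpa using h2 v 0 (by norm_num),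
      by simpa using h2 v 1 (by norm_num)⟩⟩
  · rintro ⟨h1, h2⟩
    refine ⟨h1, fun v i hi => ?_⟩
    interval_cases i
    · simpa using (h2 v).1
    · simpa using (h2 v).2

lemma cube_subset_A {z : V → ℝ} (hz : z ∈ graphicalComplement G) (hc : z ∈ cube) :
    z ∈ arrComplement G 3 :=
  (mem_A_iff G).2 ⟨hz, fun v => ⟨(hc v).1.ne', (hc v).2.ne⟩⟩

lemma A_subset_GC : arrComplement G 3 ⊆ graphicalComplement G := fun _ hz => hz.1

lemma combo_lt {a b p q p' q' : ℝ} (ha : 0 ≤ a) (hb : 0 ≤ b) (hab : a + b = 1)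
    (h1 : p < p') (h2 : q < q') : a * p + b * q < a * p' + b * q' := by
  rcases ha.lt_or_eq with ha' | ha'
  · exact add_lt_add_of_lt_of_le (mul_lt_mul_of_pos_left h1 ha')
      (mul_le_mul_of_nonneg_left h2.le hb)
  · have hb1 : b = 1 := by linarith
    subst hb1; rw [← ha']; simpa using h2

lemma segment_subset_GC {z w : V → ℝ} (hz : z ∈ graphicalComplement G)
    (hw : ∀ u u', z u < z u' → w u < w u') :
    segment ℝ z w ⊆ graphicalComplement G := by
  rintro y ⟨a, b, ha, hb, hab, rfl⟩ u u' hadj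
  have key : ∀ p q : V, z p < z q →
      (a • z + b • w) p < (a • z + b • w) q := by
    intro p q hpq
    simp only [Pi.add_apply, Pi.smul_apply, smul_eq_mul]
    exact combo_lt ha hb hab hpq (hw _ _ hpq)
  rcases (hz u u' hadj).lt_or_gt with h | h
  · exact (key u u' h).ne
  · exact (key u' u h).ne'

lemma mem_component_of_order {z w : V → ℝ} (hz : z ∈ graphicalComplement G)
    (hw : ∀ u u', z u < z u' → w u < w u') :
    w ∈ connectedComponentIn (graphicalComplement G) z := by
  have hseg : segment ℝ z w ⊆ connectedComponentIn (graphicalComplement G) z :=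
    (convex_segment z w).isPreconnected.subset_connectedComponentIn
      (left_mem_segment ℝ z w) (segment_subset_GC G hz hw)
  exact hseg (right_mem_segment ℝ z w)

/-- coordinate-wise squashing -/
noncomputable def H (z : V → ℝ) : V → ℝ := fun v => sq (z v)

lemma H_continuous : Continuous (H (V := V)) :=
  continuous_pi fun v => sq_continuous.comp (continuous_apply v)

lemma H_mem_cube (z : V → ℝ) : H z ∈ cube (V := V) := fun v => sq_mem (z v)

lemma H_order (z : V → ℝ) : ∀ u u', z u < z u' → H z u < H z u' :=
  fun _ _ h => sq_strictMono h

lemma segment_subset_cube {y w : V → ℝ} (hy : y ∈ cube (V := V)) (hw : w ∈ cube (V := V)) :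
    segment ℝ y w ⊆ cube (V := V) := by
  rintro p ⟨a, b, ha, hb, hab, rfl⟩ v
  have h1 := (hy v).1; have h2 := (hy v).2
  have h3 := (hw v).1; have h4 := (hw v).2
  simp only [Pi.add_apply, Pi.smul_apply, smul_eq_mul]
  have k1 := combo_lt ha hb hab h1 h3
  have k2 := combo_lt ha hb hab h2 h4
  constructor <;> nlinarith

/-- Confinement: a connected component of the m=3 arrangement complement starting
in the cube stays in the cube. -/
lemma comp_subset_cube {x : V → ℝ} (hx : x ∈ arrComplement G 3) (hcx : x ∈ cube (V := V)) :
    connectedComponentIn (arrComplement G 3) x ⊆ cube (V := V) := by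
  intro z hz v
  set S := connectedComponentIn (arrComplement G 3) x with hS
  have hT : IsPreconnected ((fun y : V → ℝ => y v) '' S) :=
    isPreconnected_connectedComponentIn.image _ (continuous_apply v).continuousOn
  have hxT : x v ∈ (fun y : V → ℝ => y v) '' S :=
    ⟨x, mem_connectedComponentIn hx, rfl⟩
  have hzT : z v ∈ (fun y : V → ℝ => y v) '' S := ⟨z, hz, rfl⟩
  have hne : ∀ t ∈ (fun y : V → ℝ => y v) '' S, t ≠ 0 ∧ t ≠ 1 := by
    rintro t ⟨y, hy, rfl⟩
    exact ((mem_A_iff G).1 (connectedComponentIn_subset _ _ hy)).2 v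
  constructor
  · by_contra h
    push_neg at h
    have h0 : (0:ℝ) ∈ Icc (z v) (x v) := ⟨h, (hcx v).1.le⟩
    exact (hne 0 (hT.Icc_subset hzT hxT h0)).1 rfl
  · by_contra h
    push_neg at h
    have h1 : (1:ℝ) ∈ Icc (x v) (z v) := ⟨(hcx v).2.le, h⟩
    exact (hne 1 (hT.Icc_subset hxT hzT h1)).2 rfl

/-- If a component of the arrangement complement is bounded, its base point is in the cube. -/
lemma mem_cube_of_bounded {x : V → ℝ} (hx : x ∈ arrComplement G 3)
    (hb : IsBounded (connectedComponentIn (arrComplement G 3) x)) : x ∈ cube (V := V) := by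
  rw [mem_A_iff] at hx
  by_contra hcx
  simp only [cube, mem_setOf_eq] at hcx
  push_neg at hcx
  obtain ⟨v₀, hv₀⟩ := hcx
  -- the pushing path
  set γ : ℝ → (V → ℝ) := fun t v => x v + max t 0 * (max (x v - 1) 0 + min (x v) 0) with hγ
  have hcont : Continuous γ := by
    apply continuous_pi; intro v
    exact continuous_const.add (((continuous_id.max continuous_const)).mul continuous_const)
  have hmemA : ∀ t, γ t ∈ arrComplement G 3 := by
    intro t
    have hs : 0 ≤ max t 0 := le_max_right _ _
    set s := max t 0
    have hmono : ∀ a b : ℝ, a < b →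
        a + s * (max (a - 1) 0 + min a 0) < b + s * (max (b - 1) 0 + min b 0) := by
      intro a b hab
      have h1 : max (a - 1) 0 ≤ max (b - 1) 0 := max_le_max (by linarith) le_rfl
      have h2 : min a 0 ≤ min b 0 := min_le_min hab.le le_rfl
      nlinarith
    rw [mem_A_iff]
    refine ⟨?_, ?_⟩
    · intro u w hadj
      rcases (hx.1 u w hadj).lt_or_gt with h | h
      · exact (hmono _ _ h).ne
      · exact (hmono _ _ h).ne'
    · intro v
      obtain ⟨h0, h1⟩ := hx.2 v
      rcases lt_trichotomy (x v) 0 with h | h | h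
      · have : max (x v - 1) 0 = 0 := max_eq_right (by linarith)
        have : γ t v = x v + s * (x v) := by
          simp only [hγ, this, min_eq_left h.le]; ring_nf; rfl
        rw [this]
        constructor <;> nlinarith
      · exact absurd h h0
      · rcases lt_trichotomy (x v) 1 with h' | h' | h'
        · have e1 : max (x v - 1) 0 = 0 := max_eq_right (by linarith)
          have e2 : min (x v) 0 = 0 := min_eq_right h.le
          have : γ t v = x v := by simp [hγ, e1, e2]
          rw [this]; exact ⟨h0, h1⟩
        · exact absurd h' h1
        · have e1 : max (x v - 1) 0 = x v - 1 := max_eq_left (by linarith)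
          have e2 : min (x v) 0 = 0 := min_eq_right (by linarith)
          have : γ t v = x v + s * (x v - 1) := by simp [hγ, e1, e2]; exact Or.inl rfl
          rw [this]
          constructor <;> nlinarith
  have hγ0 : γ 0 = x := by
    funext v; simp [hγ]
  have himg : γ '' univ ⊆ connectedComponentIn (arrComplement G 3) x := by
    apply IsPreconnected.subset_connectedComponentIn
    · exact isPreconnected_univ.image γ hcont.continuousOn
    · exact ⟨0, mem_univ 0, hγ0⟩
    · rintro _ ⟨t, -, rfl⟩; exact hmemA t
  obtain ⟨r, hr⟩ := hb.subset_closedBall 0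
  -- the coordinate v₀ escapes
  set c : ℝ := max (x v₀ - 1) 0 + min (x v₀) 0 with hc
  have hx0 := (hx.2 v₀).1
  have hx1 := (hx.2 v₀).2
  have hcases : x v₀ < 0 ∨ 1 < x v₀ := by
    rcases lt_trichotomy (x v₀) 0 with h | h | h
    · exact Or.inl h
    · exact absurd h hx0
    · exact Or.inr (lt_of_le_of_ne (hv₀ h) (Ne.symm hx1))
  have hcne : c ≠ 0 := by
    rcases hcases with h | h
    · have e1 : max (x v₀ - 1) 0 = 0 := max_eq_right (by linarith)
      have e2 : min (x v₀) 0 = x v₀ := min_eq_left h.le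
      rw [hc, e1, e2]; simpa using h.ne
    · have e1 : max (x v₀ - 1) 0 = x v₀ - 1 := max_eq_left (by linarith)
      have e2 : min (x v₀) 0 = 0 := min_eq_right (by linarith)
      rw [hc, e1, e2]; intro hh; nlinarith
  have hcpos : 0 < |c| := abs_pos.2 hcne
  set t₀ : ℝ := (|r| + |x v₀| + 1) / |c| with ht₀
  have ht₀pos : 0 < t₀ := by
    apply div_pos _ hcpos
    have := abs_nonneg r; have := abs_nonneg (x v₀); linarith
  have hmem : γ t₀ ∈ Metric.closedBall (0 : V → ℝ) r :=
    hr (himg ⟨t₀, mem_univ _, rfl⟩)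
  have hnorm : ‖γ t₀‖ ≤ r := by simpa using hmem
  have hcoord : |γ t₀ v₀| ≤ r := by
    calc |γ t₀ v₀| = ‖γ t₀ v₀‖ := rfl
      _ ≤ ‖γ t₀‖ := norm_le_pi_norm _ _
      _ ≤ r := hnorm
  have hval : γ t₀ v₀ = x v₀ + t₀ * c := by
    simp only [hγ, hc]
    rw [max_eq_left ht₀pos.le]
  have htc : |t₀ * c| = |r| + |x v₀| + 1 := by
    rw [abs_mul, abs_of_pos ht₀pos, ht₀, div_mul_cancel₀]
    exact hcpos.ne'
  have : |r| + 1 ≤ |γ t₀ v₀| := by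
    rw [hval]
    have h1 : |t₀ * c| - |x v₀| ≤ |x v₀ + t₀ * c| := by
      have h := abs_sub_abs_le_abs_sub (t₀ * c) (-(x v₀))
      rw [abs_neg, sub_neg_eq_add, add_comm (t₀ * c) (x v₀)] at h
      exact h
    rw [htc] at h1; linarith
  have : r < |γ t₀ v₀| := lt_of_lt_of_le (by linarith [le_abs_self r]) this
  linarith

/-- For a region C of the graphical arrangement, the intersection with the cube
is nonempty and connected. -/
lemma part1 {x : V → ℝ} (hx : x ∈ graphicalComplement G) :
    (connectedComponentIn (graphicalComplement G) x ∩ cube (V := V)).Nonempty ∧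
      IsConnected (connectedComponentIn (graphicalComplement G) x ∩ cube (V := V)) := by
  set GC := graphicalComplement G with hGC
  set C := connectedComponentIn GC x with hC
  have hCsub : C ⊆ GC := connectedComponentIn_subset _ _
  have hcomp_eq : ∀ z ∈ C, connectedComponentIn GC z = C :=
    fun z hz => (connectedComponentIn_eq hz).symm
  have hHmem : ∀ z ∈ C, H z ∈ C ∩ cube (V := V) := by
    intro z hz
    refine ⟨?_, H_mem_cube z⟩
    rw [← hcomp_eq z hz]
    exact mem_component_of_order G (hCsub hz) (H_order z)
  have hne : (C ∩ cube (V := V)).Nonempty := ⟨H x, hHmem x (mem_connectedComponentIn hx)⟩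
  refine ⟨hne, hne, ?_⟩
  -- preconnectedness via union of segments and the image of C
  have hHimg : H '' C ⊆ C ∩ cube (V := V) := by
    rintro _ ⟨z, hz, rfl⟩; exact hHmem z hz
  have hHC_pre : IsPreconnected (H '' C) :=
    isPreconnected_connectedComponentIn.image _ (H_continuous).continuousOn
  have hseg : ∀ y ∈ C ∩ cube (V := V), segment ℝ y (H y) ⊆ C ∩ cube (V := V) := by
    rintro y ⟨hyC, hycube⟩
    have h1 : segment ℝ y (H y) ⊆ GC :=
      segment_subset_GC G (hCsub hyC) (H_order y)
    have h2 : segment ℝ y (H y) ⊆ C := by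
      rw [← hcomp_eq y hyC]
      exact (convex_segment _ _).isPreconnected.subset_connectedComponentIn
        (left_mem_segment ℝ _ _) h1
    exact fun p hp => ⟨h2 hp, segment_subset_cube hycube (H_mem_cube y) hp⟩
  have heq : C ∩ cube (V := V) =
      ⋃₀ ((fun y => segment ℝ y (H y) ∪ H '' C) '' (C ∩ cube (V := V))) := by
    apply Subset.antisymm
    · intro y hy
      exact ⟨_, ⟨y, hy, rfl⟩, Or.inl (left_mem_segment ℝ _ _)⟩
    · rintro p ⟨_, ⟨y, hy, rfl⟩, hp⟩
      rcases hp with hp | hp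
      · exact hseg y hy hp
      · exact hHimg hp
  rw [heq]
  apply isPreconnected_sUnion (H x)
  · rintro _ ⟨y, hy, rfl⟩
    exact Or.inr ⟨x, mem_connectedComponentIn hx, rfl⟩
  · rintro _ ⟨y, hy, rfl⟩
    exact IsPreconnected.union (H y) (right_mem_segment ℝ _ _) ⟨y, hy.1, rfl⟩
      (convex_segment _ _).isPreconnected hHC_pre

/-- Key identification: C ∩ cube is the component of A(G;3) at any of its points. -/
lemma region_inter_eq {x : V → ℝ} (hx : x ∈ graphicalComplement G) {y : V → ℝ}
    (hy : y ∈ connectedComponentIn (graphicalComplement G) x ∩ cube (V := V)) :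
    connectedComponentIn (graphicalComplement G) x ∩ cube (V := V) =
      connectedComponentIn (arrComplement G 3) y := by
  have hCsub : connectedComponentIn (graphicalComplement G) x ⊆ graphicalComplement G :=
    connectedComponentIn_subset _ _
  have hyA : y ∈ arrComplement G 3 := cube_subset_A G (hCsub hy.1) hy.2
  apply Subset.antisymm
  · apply IsPreconnected.subset_connectedComponentIn
    · exact (part1 G hx).2.isPreconnected
    · exact hy
    · exact fun z hz => cube_subset_A G (hCsub hz.1) hz.2
  · intro z hz
    have hzcube : z ∈ cube (V := V) := comp_subset_cube G hyA hy.2 hz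
    have hsub : connectedComponentIn (arrComplement G 3) y ⊆
        connectedComponentIn (graphicalComplement G) y :=
      IsPreconnected.subset_connectedComponentIn isPreconnected_connectedComponentIn
        (mem_connectedComponentIn hyA)
        (fun w hw => A_subset_GC G (connectedComponentIn_subset _ _ hw))
    have hzC : z ∈ connectedComponentIn (graphicalComplement G) x := by
      rw [connectedComponentIn_eq hy.1]
      exact hsub hz
    exact ⟨hzC, hzcube⟩

end RegionsAux

open RegionsAux Set Bornology in
/-- Each region of the graphical arrangement of `G` meets the open unit hypercube in a
nonempty connected set; these intersections are pairwise disjoint for distinct regions;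
consequently the number of regions of the graphical arrangement equals the number of
bounded regions of `A(G;3)`. -/
theorem regions_meet_unit_cube {V : Type*} [Fintype V] (G : SimpleGraph V) :
    (∀ C : Set (V → ℝ),
        (∃ x ∈ graphicalComplement G, C = connectedComponentIn (graphicalComplement G) x) →
        (C ∩ {z | ∀ v, 0 < z v ∧ z v < 1}).Nonempty ∧
          IsConnected (C ∩ {z | ∀ v, 0 < z v ∧ z v < 1})) ∧
    (∀ C₁ C₂ : Set (V → ℝ),
        (∃ x ∈ graphicalComplement G, C₁ = connectedComponentIn (graphicalComplement G) x) →
        (∃ x ∈ graphicalComplement G, C₂ = connectedComponentIn (graphicalComplement G) x) →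
        C₁ ≠ C₂ →
        Disjoint (C₁ ∩ {z | ∀ v, 0 < z v ∧ z v < 1}) (C₂ ∩ {z | ∀ v, 0 < z v ∧ z v < 1})) ∧
    Nat.card {C : Set (V → ℝ) //
        ∃ x ∈ graphicalComplement G, C = connectedComponentIn (graphicalComplement G) x} =
      Nat.card {C : Set (V → ℝ) //
        (∃ x ∈ arrComplement G 3, C = connectedComponentIn (arrComplement G 3) x) ∧
        Bornology.IsBounded C} := by
  have hcube_eq : {z : V → ℝ | ∀ v, 0 < z v ∧ z v < 1} = cube (V := V) := rfl
  refine ⟨?_, ?_, ?_⟩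
  · rintro C ⟨x, hx, rfl⟩
    rw [hcube_eq]
    exact part1 G hx
  · rintro C₁ C₂ ⟨x₁, hx₁, rfl⟩ ⟨x₂, hx₂, rfl⟩ hne
    have hdisj : Disjoint (connectedComponentIn (graphicalComplement G) x₁)
        (connectedComponentIn (graphicalComplement G) x₂) := by
      rw [Set.disjoint_left]
      intro y hy₁ hy₂
      exact hne ((connectedComponentIn_eq hy₁).trans (connectedComponentIn_eq hy₂).symm)
    exact hdisj.mono inter_subset_left inter_subset_left
  · -- the equiv
    have hcube_bdd : IsBounded (cube (V := V)) := by
      apply (Metric.isBounded_closedBall (x := (0 : V → ℝ)) (r := 1)).subset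
      intro z hz
      rw [Metric.mem_closedBall, dist_zero_right]
      rw [pi_norm_le_iff_of_nonneg zero_le_one]
      intro v
      rw [Real.norm_eq_abs, abs_le]
      exact ⟨by linarith [(hz v).1], (hz v).2.le⟩
    set f : {C : Set (V → ℝ) //
        ∃ x ∈ graphicalComplement G, C = connectedComponentIn (graphicalComplement G) x} →
        {C : Set (V → ℝ) //
        (∃ x ∈ arrComplement G 3, C = connectedComponentIn (arrComplement G 3) x) ∧
        Bornology.IsBounded C} := fun ⟨C, hC⟩ =>
      ⟨C ∩ cube (V := V), by
        obtain ⟨x, hx, rfl⟩ := hC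
        have hHx : H x ∈ connectedComponentIn (graphicalComplement G) x ∩ cube (V := V) := by
          refine ⟨?_, H_mem_cube x⟩
          exact mem_component_of_order G hx (H_order x)
        refine ⟨⟨H x, ?_, region_inter_eq G hx hHx⟩, ?_⟩
        · exact cube_subset_A G
            (connectedComponentIn_subset _ _ hHx.1) hHx.2
        · exact hcube_bdd.subset inter_subset_right⟩ with hf
    have hinj : Function.Injective f := by
      rintro ⟨C₁, hC₁⟩ ⟨C₂, hC₂⟩ hfeq
      have heq : C₁ ∩ cube (V := V) = C₂ ∩ cube (V := V) := by
        simpa [hf] using congrArg Subtype.val hfeq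
      obtain ⟨x₁, hx₁, rfl⟩ := hC₁
      obtain ⟨x₂, hx₂, rfl⟩ := hC₂
      obtain ⟨y, hy⟩ := (part1 G hx₁).1
      have hy₂ : y ∈ connectedComponentIn (graphicalComplement G) x₂ ∩ cube (V := V) :=
        heq ▸ hy
      exact Subtype.ext
        ((connectedComponentIn_eq hy.1).trans (connectedComponentIn_eq hy₂.1).symm)
    have hsurj : Function.Surjective f := by
      rintro ⟨D, ⟨x, hxA, rfl⟩, hbdd⟩
      have hxcube : x ∈ cube (V := V) := mem_cube_of_bounded G hxA hbdd
      have hxGC : x ∈ graphicalComplement G := A_subset_GC G hxA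
      refine ⟨⟨connectedComponentIn (graphicalComplement G) x, x, hxGC, rfl⟩, ?_⟩
      apply Subtype.ext
      have hxmem : x ∈ connectedComponentIn (graphicalComplement G) x ∩ cube (V := V) :=
        ⟨mem_connectedComponentIn hxGC, hxcube⟩
      simpa [hf] using region_inter_eq G hxGC hxmem
    exact Nat.card_congr (Equiv.ofBijective f ⟨hinj, hsurj⟩)
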